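/- For all x > 0 and ν > -1/2, the inequality e^{-x} < Γ(ν+1)(2/x)^ν e^{-x} I_ν(x) < (1 + e^{-2x})/2 holds, where I_ν is the modified Bessel function of the first kind. -/

import Mathlib

open Real

/-- Modified Bessel function of the first kind of order `ν`. -/
noncomputable def besselI (ν x : ℝ) : ℝ :=
  ∑' m : ℕ, (1 / ((m.factorial : ℝ) * Real.Gamma ((m : ℝ) + ν + 1))) *
    (x / 2) ^ (2 * (m : ℝ) + ν)

lemma besselI_key (ν : ℝ) (hν : -1/2 < ν) (m : ℕ) :
    (((2*m).factorial : ℝ) * Real.Gamma (ν + 1) ≤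
      4^m * (m.factorial : ℝ) * Real.Gamma ((m : ℝ) + ν + 1)) ∧
    (1 ≤ m → ((2*m).factorial : ℝ) * Real.Gamma (ν + 1) <
      4^m * (m.factorial : ℝ) * Real.Gamma ((m : ℝ) + ν + 1)) := by
  induction m with
  | zero => simp
  | succ m ih =>
    have hmpos : (0:ℝ) < (m:ℝ) + ν + 1 := by
      have := Nat.cast_nonneg (α := ℝ) m; linarith
    have hΓpos : 0 < Real.Gamma ((m : ℝ) + ν + 1) := Real.Gamma_pos_of_pos hmpos
    have hΓν : 0 < Real.Gamma (ν + 1) := Real.Gamma_pos_of_pos (by linarith)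
    have hrec : Real.Gamma (((m+1 : ℕ) : ℝ) + ν + 1)
        = ((m:ℝ) + ν + 1) * Real.Gamma ((m : ℝ) + ν + 1) := by
      have h1 : (((m+1 : ℕ)) : ℝ) + ν + 1 = ((m:ℝ) + ν + 1) + 1 := by push_cast; ring
      rw [h1, Real.Gamma_add_one (ne_of_gt hmpos)]
    have hfac2 : ((2*(m+1)).factorial : ℝ)
        = (2*(m:ℝ)+2) * (2*(m:ℝ)+1) * ((2*m).factorial : ℝ) := by
      have h2 : 2*(m+1) = (2*m+1) + 1 := by ring
      rw [h2, Nat.factorial_succ, Nat.factorial_succ]; push_cast; ring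
    have hfac1 : (((m+1).factorial) : ℝ) = ((m:ℝ)+1) * (m.factorial : ℝ) := by
      rw [Nat.factorial_succ]; push_cast; ring
    have hfpos : (0:ℝ) < ((2*m).factorial : ℝ) := by positivity
    have hmfpos : (0:ℝ) < (m.factorial : ℝ) := by positivity
    have h4 : (0:ℝ) < (4:ℝ)^m := by positivity
    have key : ((2*(m+1)).factorial : ℝ) * Real.Gamma (ν + 1) <
        4^(m+1) * ((m+1).factorial : ℝ) * Real.Gamma (((m+1 : ℕ) : ℝ) + ν + 1) := by
      rw [hrec, hfac2, hfac1, pow_succ]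
      have step : (2*(m:ℝ)+2) * (2*(m:ℝ)+1) < 4 * ((m:ℝ)+1) * ((m:ℝ)+ν+1) := by
        nlinarith [Nat.cast_nonneg (α := ℝ) m]
      calc (2*(m:ℝ)+2) * (2*(m:ℝ)+1) * ((2*m).factorial : ℝ) * Real.Gamma (ν + 1)
          ≤ (2*(m:ℝ)+2) * (2*(m:ℝ)+1) *
              (4^m * (m.factorial : ℝ) * Real.Gamma ((m : ℝ) + ν + 1)) := by
            have := ih.1
            have hpos : (0:ℝ) ≤ (2*(m:ℝ)+2) * (2*(m:ℝ)+1) := by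
              have := Nat.cast_nonneg (α := ℝ) m; nlinarith
            nlinarith
        _ < 4 * ((m:ℝ)+1) * ((m:ℝ)+ν+1) *
              (4^m * (m.factorial : ℝ) * Real.Gamma ((m : ℝ) + ν + 1)) := by
            have hpos2 : (0:ℝ) < 4^m * (m.factorial : ℝ) * Real.Gamma ((m : ℝ) + ν + 1) := by
              positivity
            exact mul_lt_mul_of_pos_right step hpos2
        _ = 4 ^ m * 4 * (((m:ℝ)+1) * (m.factorial : ℝ)) * (((m:ℝ) + ν + 1) *
              Real.Gamma ((m : ℝ) + ν + 1)) := by ring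
    exact ⟨key.le, fun _ => key⟩

theorem besselI_luke_inequality (x ν : ℝ) (hx : 0 < x) (hν : -1/2 < ν) :
    Real.exp (-x) < Real.Gamma (ν + 1) * (2 / x) ^ ν * Real.exp (-x) * besselI ν x ∧
    Real.Gamma (ν + 1) * (2 / x) ^ ν * Real.exp (-x) * besselI ν x <
      (1 + Real.exp (-2 * x)) / 2 := by
  have hΓν : 0 < Real.Gamma (ν + 1) := Real.Gamma_pos_of_pos (by linarith)
  have hx2 : (0:ℝ) < x / 2 := by linarith
  have hΓpos : ∀ m : ℕ, 0 < Real.Gamma ((m : ℝ) + ν + 1) := fun m =>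
    Real.Gamma_pos_of_pos (by have := Nat.cast_nonneg (α := ℝ) m; linarith)
  set g : ℕ → ℝ := fun m =>
    Real.Gamma (ν + 1) / ((m.factorial : ℝ) * Real.Gamma ((m : ℝ) + ν + 1)) *
      (x / 2) ^ (2 * m) with hg
  set h : ℕ → ℝ := fun m => x ^ (2 * m) / ((2 * m).factorial : ℝ) with hh
  -- Step A : rewrite the product as a tsum
  have hA : Real.Gamma (ν + 1) * (2 / x) ^ ν * besselI ν x = ∑' m, g m := by
    rw [besselI, ← tsum_mul_left]
    refine tsum_congr fun m => ?_
    have h1 : (x / 2 : ℝ) ^ (2 * (m:ℝ) + ν) = (x / 2) ^ (2*m) * (x / 2) ^ ν := by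
      rw [Real.rpow_add hx2]
      congr 1
      rw [show (2 * (m:ℝ)) = ((2*m : ℕ) : ℝ) by push_cast; ring, Real.rpow_natCast]
    have h2 : (2 / x : ℝ) ^ ν * (x / 2 : ℝ) ^ ν = 1 := by
      rw [← Real.mul_rpow (by positivity) (by positivity)]
      rw [show (2/x) * (x/2) = 1 by field_simp, Real.one_rpow]
    simp only [hg]
    rw [h1]
    have h3 : Real.Gamma (ν + 1) * (2 / x) ^ ν *
        (1 / ((m.factorial : ℝ) * Real.Gamma ((m : ℝ) + ν + 1)) *
          ((x / 2) ^ (2*m) * (x / 2) ^ ν))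
        = ((2 / x : ℝ) ^ ν * (x / 2 : ℝ) ^ ν) *
          (Real.Gamma (ν + 1) / ((m.factorial : ℝ) * Real.Gamma ((m : ℝ) + ν + 1)) *
            (x / 2) ^ (2*m)) := by ring
    rw [h3, h2, one_mul]
  -- positivity and comparison facts
  have gpos : ∀ m, 0 < g m := fun m => by
    have h1 := hΓpos m
    have h2 : (0:ℝ) < (m.factorial : ℝ) := by positivity
    simp only [hg]
    positivity
  have hpow4 : ∀ m : ℕ, ((x/2) ^ (2*m) : ℝ) = x ^ (2*m) / 4^m := by
    intro m
    have h4 : ((2:ℝ)) ^ (2*m) = 4^m := by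
      rw [pow_mul]; norm_num
    rw [div_pow, h4]
  have hle : ∀ m, g m ≤ h m := by
    intro m
    have hkey := (besselI_key ν hν m).1
    have hB : (0:ℝ) < (m.factorial : ℝ) * Real.Gamma ((m : ℝ) + ν + 1) := by
      have := hΓpos m; positivity
    have hfac : (0:ℝ) < ((2*m).factorial : ℝ) := by positivity
    simp only [hg, hh]
    rw [hpow4 m, div_mul_div_comm, div_le_div_iff₀ (by positivity) hfac]
    calc Real.Gamma (ν + 1) * x ^ (2*m) * ((2*m).factorial : ℝ)
        = ((2*m).factorial : ℝ) * Real.Gamma (ν + 1) * x ^ (2*m) := by ring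
      _ ≤ 4^m * (m.factorial : ℝ) * Real.Gamma ((m : ℝ) + ν + 1) * x ^ (2*m) :=
          mul_le_mul_of_nonneg_right hkey (by positivity)
      _ = (m.factorial : ℝ) * Real.Gamma ((m : ℝ) + ν + 1) * (4^m * x ^ (2*m)) := by ring
      _ = x ^ (2*m) * ((m.factorial : ℝ) * Real.Gamma ((m : ℝ) + ν + 1) * 4^m) := by ring
  have hlt1 : g 1 < h 1 := by
    have hkey := (besselI_key ν hν 1).2 le_rfl
    have hB : (0:ℝ) < ((1:ℕ).factorial : ℝ) * Real.Gamma (((1:ℕ) : ℝ) + ν + 1) := by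
      have := hΓpos 1; positivity
    have hfac : (0:ℝ) < ((2*1).factorial : ℝ) := by positivity
    simp only [hg, hh]
    rw [hpow4 1, div_mul_div_comm, div_lt_div_iff₀ (by positivity) hfac]
    calc Real.Gamma (ν + 1) * x ^ (2*1) * ((2*1).factorial : ℝ)
        = ((2*1).factorial : ℝ) * Real.Gamma (ν + 1) * x ^ (2*1) := by ring
      _ < 4^1 * ((1:ℕ).factorial : ℝ) * Real.Gamma (((1:ℕ) : ℝ) + ν + 1) * x ^ (2*1) :=
          mul_lt_mul_of_pos_right hkey (by positivity)
      _ = x ^ (2*1) * (((1:ℕ).factorial : ℝ) * Real.Gamma (((1:ℕ) : ℝ) + ν + 1) * 4^1) := by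
          ring
  -- summability
  have hinj : Function.Injective (fun m : ℕ => 2 * m) := fun a b hab => by
    simp only at hab; omega
  have hsumh : Summable h := by
    have := (Real.summable_pow_div_factorial x).comp_injective hinj
    exact this
  have hsumg : Summable g := Summable.of_nonneg_of_le (fun m => (gpos m).le) hle hsumh
  -- tsum h equals cosh
  have hcosh : ∑' m, h m = (Real.exp x + Real.exp (-x)) / 2 := by
    have hexp : ∀ y : ℝ, Real.exp y = ∑' n : ℕ, y ^ n / n.factorial := by
      intro y
      rw [Real.exp_eq_exp_ℝ, NormedSpace.exp_eq_tsum_div]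
    set f : ℕ → ℝ := fun n => (x ^ n + (-x) ^ n) / n.factorial with hf
    have hsupp : ∀ n ∉ Set.range (fun m : ℕ => 2 * m), f n = 0 := by
      intro n hn
      have hodd : Odd n := by
        rcases Nat.even_or_odd n with he | ho
        · obtain ⟨k, hk⟩ := he
          exact absurd ⟨k, by simp only []; omega⟩ hn
        · exact ho
      simp only [hf, hodd.neg_pow]
      ring
    have heq : ∑' m : ℕ, f (2 * m) = ∑' n, f n :=
      hinj.tsum_eq (Function.support_subset_iff'.mpr hsupp)
    have hfeq : ∀ m : ℕ, f (2 * m) = 2 * h m := by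
      intro m
      have he : (-x) ^ (2*m) = x ^ (2*m) := by
        rw [pow_mul, pow_mul, neg_pow_two]
      simp only [hf, hh, he]
      ring
    have hsum1 : Summable (fun n : ℕ => x ^ n / (n.factorial : ℝ)) :=
      Real.summable_pow_div_factorial x
    have hsum2 : Summable (fun n : ℕ => (-x) ^ n / (n.factorial : ℝ)) :=
      Real.summable_pow_div_factorial (-x)
    have htot : ∑' n, f n = Real.exp x + Real.exp (-x) := by
      rw [hexp x, hexp (-x), ← Summable.tsum_add hsum1 hsum2]
      exact tsum_congr fun n => by simp only [hf]; ring
    have h2 : ∑' m : ℕ, f (2 * m) = 2 * ∑' m, h m := by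
      rw [show (fun m : ℕ => f (2*m)) = fun m => 2 * h m from funext hfeq]
      exact tsum_mul_left
    rw [h2, htot] at heq
    linarith
  -- lower bound
  have hg0 : g 0 = 1 := by
    simp only [hg]
    norm_num
    exact ne_of_gt hΓν
  have hglow : 1 < ∑' m, g m := by
    have hsle := Summable.sum_le_tsum (Finset.range 2) (fun i _ => (gpos i).le) hsumg
    rw [Finset.sum_range_succ, Finset.sum_range_one, hg0] at hsle
    have := gpos 1
    linarith
  have hgh : ∑' m, g m < ∑' m, h m :=
    Summable.tsum_lt_tsum_of_nonneg (fun m => (gpos m).le) hle hlt1 hsumh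
  have hepos : 0 < Real.exp (-x) := Real.exp_pos _
  have hrw : Real.Gamma (ν + 1) * (2 / x) ^ ν * Real.exp (-x) * besselI ν x
      = Real.exp (-x) * ∑' m, g m := by
    rw [← hA]; ring
  constructor
  · rw [hrw]
    nlinarith
  · rw [hrw]
    have hmain : Real.exp (-x) * ∑' m, g m < Real.exp (-x) * ∑' m, h m :=
      mul_lt_mul_of_pos_left hgh hepos
    rw [hcosh] at hmain
    have hee : Real.exp (-x) * Real.exp x = 1 := by
      rw [← Real.exp_add]; simp
    have hee2 : Real.exp (-x) * Real.exp (-x) = Real.exp (-2*x) := by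
      rw [← Real.exp_add]; ring_nf
    nlinarith
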